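/- Let $\mathfrak{g}$ be a finite-dimensional Lie algebra with structure constants $C^a{}_{bc}$ satisfying antisymmetry and the Jacobi identity. In the graded algebra generated by commuting $G_a$, anticommuting $\eta^a$, and anticommuting $\mathcal{P}_a$ with graded Poisson bracket determined by $[G_a, G_b] = C^c{}_{ab} G_c$, $[\mathcal{P}_a, \eta^b] = -\delta_a{}^b$, and all other basic brackets zero, the element $\Omega = G_a \eta^a - \tfrac{1}{2} \mathcal{P}_a C^a{}_{bc} \eta^c \eta^b$ satisfies $[\Omega, \Omega] = 0$. -/

import Mathlib

open MvPolynomial Finset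

/-- The extended algebra `ℚ[G₁,…,Gₙ] ⊗ Λ(η¹,…,ηⁿ,𝒫₁,…,𝒫ₙ)`: an element is given by
its polynomial coefficient on each monomial in the anticommuting ghosts `η^a`
(index `Sum.inl a`) and ghost momenta `𝒫_a` (index `Sum.inr a`), the Grassmann
monomial attached to a subset `S` being the product of its generators in
increasing order of `idx`. -/
abbrev SA (n : ℕ) := Finset (Fin n ⊕ Fin n) → MvPolynomial (Fin n) ℚ

/-- Position of a Grassmann generator in the chosen ordering: ghosts first. -/
def idx {n : ℕ} : Fin n ⊕ Fin n → ℕ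
  | Sum.inl a => (a : ℕ)
  | Sum.inr a => n + (a : ℕ)

/-- The Koszul sign produced when merging two ordered Grassmann monomials. -/
def sgn {n : ℕ} (T U : Finset (Fin n ⊕ Fin n)) : ℚ :=
  (-1 : ℚ) ^ ((T ×ˢ U).filter (fun p => idx p.2 < idx p.1)).card

/-- The (super-commutative) product of the extended algebra. -/
noncomputable def amul {n : ℕ} (x y : SA n) : SA n :=
  fun S => ∑ T ∈ S.powerset, sgn T (S \ T) • (x T * y (S \ T))

/-- The unit of the extended algebra. -/
noncomputable def aone {n : ℕ} : SA n := fun S => if S = ∅ then 1 else 0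

/-- The generator `G_a`. -/
noncomputable def Gg {n : ℕ} (a : Fin n) : SA n := fun S => if S = ∅ then X a else 0

/-- The ghost `η^a`. -/
noncomputable def ηg {n : ℕ} (a : Fin n) : SA n := fun S => if S = {Sum.inl a} then 1 else 0

/-- The ghost momentum `𝒫_a`. -/
noncomputable def Pg {n : ℕ} (a : Fin n) : SA n := fun S => if S = {Sum.inr a} then 1 else 0

/-- The (even) derivative `∂/∂G_a`. -/
noncomputable def dG {n : ℕ} (a : Fin n) (x : SA n) : SA n := fun S => (pderiv a) (x S)

/-- Left derivative with respect to the Grassmann generator `i`. -/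
noncomputable def dL {n : ℕ} (i : Fin n ⊕ Fin n) (x : SA n) : SA n := fun S =>
  if i ∈ S then 0
  else ((-1 : ℚ) ^ (S.filter (fun j => idx j < idx i)).card) • x (insert i S)

/-- Right derivative with respect to the Grassmann generator `i`. -/
noncomputable def dR {n : ℕ} (i : Fin n ⊕ Fin n) (x : SA n) : SA n := fun S =>
  if i ∈ S then 0
  else ((-1 : ℚ) ^ (S.filter (fun j => idx i < idx j)).card) • x (insert i S)

/-- The graded Poisson bracket of the extended algebra, determined by
`[G_a, G_b] = C a b` (a polynomial in the `G`'s), `[𝒫_a, η^b] = -δ_a^b`, all other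
basic brackets zero, extended by the graded Leibniz rule:
original (`G`) part plus ghost part. -/
noncomputable def bra {n : ℕ} (C : Fin n → Fin n → MvPolynomial (Fin n) ℚ)
    (x y : SA n) : SA n :=
  (∑ a, ∑ b, C a b • amul (dG a x) (dG b y))
  - ∑ a, (amul (dR (Sum.inr a) x) (dL (Sum.inl a) y)
          + amul (dR (Sum.inl a) x) (dL (Sum.inr a) y))

section Found
variable {n : ℕ}

/-- delta element -/
noncomputable def dd (T : Finset (Fin n ⊕ Fin n)) (v : MvPolynomial (Fin n) ℚ) : SA n :=
  fun S => if S = T then v else 0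

lemma dd_zero (T : Finset (Fin n ⊕ Fin n)) : dd T (0 : MvPolynomial (Fin n) ℚ) = 0 := by
  funext S; simp [dd]

lemma smul_dd (q : ℚ) (T : Finset (Fin n ⊕ Fin n)) (v : MvPolynomial (Fin n) ℚ) :
    q • dd T v = dd T (q • v) := by
  funext S; simp only [Pi.smul_apply, dd]; split <;> simp

lemma idx_injective : Function.Injective (idx (n := n)) := by
  rintro (a | a) (b | b) h <;> simp [idx] at h
  · exact congrArg Sum.inl (Fin.ext h)
  · exact absurd h (by omega)
  · exact absurd h (by omega)
  · exact congrArg Sum.inr (Fin.ext h)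

lemma sgn_empty_left (U : Finset (Fin n ⊕ Fin n)) : sgn ∅ U = 1 := by
  simp [sgn]

lemma sgn_empty_right (T : Finset (Fin n ⊕ Fin n)) : sgn T ∅ = 1 := by
  simp [sgn]

lemma sgn_single (i j : Fin n ⊕ Fin n) :
    sgn {i} {j} = if idx j < idx i then (-1 : ℚ) else 1 := by
  unfold sgn
  rw [Finset.singleton_product_singleton, Finset.filter_singleton]
  split <;> simp

lemma sgn_union_right {U V : Finset (Fin n ⊕ Fin n)} (T : Finset (Fin n ⊕ Fin n))
    (h : Disjoint U V) : sgn T (U ∪ V) = sgn T U * sgn T V := by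
  unfold sgn
  rw [Finset.product_union, Finset.filter_union, Finset.card_union_of_disjoint, pow_add]
  exact Finset.disjoint_filter_filter
    (Finset.disjoint_left.2 (fun p hp hp' => (Finset.disjoint_left.1 h
      (Finset.mem_product.1 hp).2) (Finset.mem_product.1 hp').2))

lemma sgn_union_left {T U : Finset (Fin n ⊕ Fin n)} (V : Finset (Fin n ⊕ Fin n))
    (h : Disjoint T U) : sgn (T ∪ U) V = sgn T V * sgn U V := by
  unfold sgn
  rw [Finset.union_product, Finset.filter_union, Finset.card_union_of_disjoint, pow_add]
  exact Finset.disjoint_filter_filter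
    (Finset.disjoint_left.2 (fun p hp hp' => (Finset.disjoint_left.1 h
      (Finset.mem_product.1 hp).1) (Finset.mem_product.1 hp').1))

end Found
section Found2
variable {n : ℕ}

lemma subset_sdiff_iff {T U S : Finset (Fin n ⊕ Fin n)} :
    (T ⊆ S ∧ S \ T = U) ↔ (Disjoint T U ∧ S = T ∪ U) := by
  constructor
  · rintro ⟨h1, rfl⟩
    exact ⟨Finset.disjoint_sdiff, (Finset.union_sdiff_of_subset h1).symm⟩
  · rintro ⟨h1, rfl⟩
    exact ⟨Finset.subset_union_left, Finset.union_sdiff_cancel_left h1⟩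

lemma amul_dd (T U : Finset (Fin n ⊕ Fin n)) (v w : MvPolynomial (Fin n) ℚ) :
    amul (dd T v) (dd U w) =
      if Disjoint T U then dd (T ∪ U) (sgn T U • (v * w)) else 0 := by
  funext S
  show (∑ T' ∈ S.powerset, sgn T' (S \ T') • (dd T v T' * dd U w (S \ T'))) = _
  have step : ∀ T' ∈ S.powerset,
      sgn T' (S \ T') • (dd T v T' * dd U w (S \ T')) =
      if T' = T then (if S \ T = U then sgn T (S \ T) • (v * w) else 0) else 0 := by
    intro T' _
    by_cases h : T' = T
    · subst h
      by_cases h2 : S \ T' = U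
      · simp [dd, h2]
      · simp [dd, h2]
    · simp [dd, h]
  rw [Finset.sum_congr rfl step, Finset.sum_ite_eq' S.powerset T]
  by_cases hd : Disjoint T U
  · simp only [hd, if_true]
    show _ = (if S = T ∪ U then sgn T U • (v * w) else 0)
    by_cases hS : S = T ∪ U
    · have h1 : T ⊆ S ∧ S \ T = U := subset_sdiff_iff.2 ⟨hd, hS⟩
      rw [if_pos (Finset.mem_powerset.2 h1.1), if_pos h1.2, h1.2]
      simp [dd, hS]
    · by_cases hT : T ∈ S.powerset
      · by_cases h2 : S \ T = U
        · exact absurd (subset_sdiff_iff.1 ⟨Finset.mem_powerset.1 hT, h2⟩).2 hS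
        · simp [hT, h2, hS]
      · simp [hT, hS]
  · simp only [hd, if_false]
    by_cases hT : T ∈ S.powerset
    · by_cases h2 : S \ T = U
      · exact absurd (subset_sdiff_iff.1 ⟨Finset.mem_powerset.1 hT, h2⟩).1 hd
      · simp [hT, h2]
    · simp [hT]

lemma dG_dd (a : Fin n) (T : Finset (Fin n ⊕ Fin n)) (v : MvPolynomial (Fin n) ℚ) :
    dG a (dd T v) = dd T (pderiv a v) := by
  funext S
  show (pderiv a) (dd T v S) = _
  unfold dd
  split <;> simp

lemma dL_dd (i : Fin n ⊕ Fin n) (T : Finset (Fin n ⊕ Fin n)) (v : MvPolynomial (Fin n) ℚ) :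
    dL i (dd T v) =
      if i ∈ T then
        ((-1 : ℚ) ^ (((T.erase i).filter (fun j => idx j < idx i)).card)) • dd (T.erase i) v
      else 0 := by
  funext S
  show (if i ∈ S then 0 else ((-1:ℚ) ^ (S.filter (fun j => idx j < idx i)).card) • dd T v (insert i S)) = _
  by_cases hiS : i ∈ S
  · simp only [hiS, if_true]
    by_cases hiT : i ∈ T
    · have : S ≠ T.erase i := fun h => (Finset.notMem_erase i T) (h ▸ hiS)
      simp [hiT, dd, this, Pi.smul_apply]
    · simp [hiT]
  · simp only [hiS, if_false]
    by_cases hiT : i ∈ T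
    · by_cases hS : S = T.erase i
      · subst hS
        have h1 : insert i (T.erase i) = T := Finset.insert_erase hiT
        simp [hiT, dd, h1]
      · have h2 : insert i S ≠ T := fun h => (hS (by rw [← h, Finset.erase_insert hiS]))
        simp [hiT, dd, h2, hS, Pi.smul_apply]
    · have h2 : insert i S ≠ T := fun h => hiT (h ▸ Finset.mem_insert_self i S)
      simp [hiT, dd, h2]

lemma dR_dd (i : Fin n ⊕ Fin n) (T : Finset (Fin n ⊕ Fin n)) (v : MvPolynomial (Fin n) ℚ) :
    dR i (dd T v) =
      if i ∈ T then
        ((-1 : ℚ) ^ (((T.erase i).filter (fun j => idx i < idx j)).card)) • dd (T.erase i) v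
      else 0 := by
  funext S
  show (if i ∈ S then 0 else ((-1:ℚ) ^ (S.filter (fun j => idx i < idx j)).card) • dd T v (insert i S)) = _
  by_cases hiS : i ∈ S
  · simp only [hiS, if_true]
    by_cases hiT : i ∈ T
    · have : S ≠ T.erase i := fun h => (Finset.notMem_erase i T) (h ▸ hiS)
      simp [hiT, dd, this, Pi.smul_apply]
    · simp [hiT]
  · simp only [hiS, if_false]
    by_cases hiT : i ∈ T
    · by_cases hS : S = T.erase i
      · subst hS
        have h1 : insert i (T.erase i) = T := Finset.insert_erase hiT
        simp [hiT, dd, h1]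
      · have h2 : insert i S ≠ T := fun h => (hS (by rw [← h, Finset.erase_insert hiS]))
        simp [hiT, dd, h2, hS, Pi.smul_apply]
    · have h2 : insert i S ≠ T := fun h => hiT (h ▸ Finset.mem_insert_self i S)
      simp [hiT, dd, h2]

end Found2
section Found3
variable {n : ℕ}

lemma amul_zero_left (y : SA n) : amul 0 y = 0 := by
  funext S; simp [amul]

lemma amul_zero_right (x : SA n) : amul x 0 = 0 := by
  funext S; simp [amul]

lemma amul_add_left (x x' y : SA n) : amul (x + x') y = amul x y + amul x' y := by
  funext S
  simp [amul, add_mul, smul_add, Finset.sum_add_distrib]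

lemma amul_add_right (x y y' : SA n) : amul x (y + y') = amul x y + amul x y' := by
  funext S
  simp [amul, mul_add, smul_add, Finset.sum_add_distrib]

lemma amul_smul_left (q : ℚ) (x y : SA n) : amul (q • x) y = q • amul x y := by
  funext S
  simp only [amul, Pi.smul_apply, Finset.smul_sum, smul_mul_assoc]
  exact Finset.sum_congr rfl fun T _ => smul_comm _ _ _

lemma amul_smul_right (q : ℚ) (x y : SA n) : amul x (q • y) = q • amul x y := by
  funext S
  simp only [amul, Pi.smul_apply, Finset.smul_sum, mul_smul_comm]
  exact Finset.sum_congr rfl fun T _ => smul_comm _ _ _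

lemma amul_sum_left {ι : Type*} (s : Finset ι) (f : ι → SA n) (y : SA n) :
    amul (∑ i ∈ s, f i) y = ∑ i ∈ s, amul (f i) y := by
  classical
  induction s using Finset.induction_on with
  | empty => simp [amul_zero_left]
  | insert a s' h ih =>
                   rw [Finset.sum_insert h, amul_add_left, ih, Finset.sum_insert h]

lemma amul_sum_right {ι : Type*} (s : Finset ι) (f : ι → SA n) (x : SA n) :
    amul x (∑ i ∈ s, f i) = ∑ i ∈ s, amul x (f i) := by
  classical
  induction s using Finset.induction_on with
  | empty => simp [amul_zero_right]
  | insert a s' h ih =>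
                   rw [Finset.sum_insert h, amul_add_right, ih, Finset.sum_insert h]

lemma amul_empty_left (v : MvPolynomial (Fin n) ℚ) (y : SA n) :
    amul (dd ∅ v) y = v • y := by
  funext S
  show (∑ T ∈ S.powerset, sgn T (S \ T) • (dd ∅ v T * y (S \ T))) = v * y S
  have step : ∀ T ∈ S.powerset,
      sgn T (S \ T) • (dd ∅ v T * y (S \ T)) =
      if T = ∅ then v * y S else 0 := by
    intro T _
    by_cases h : T = ∅
    · subst h; simp [dd, sgn_empty_left]
    · simp [dd, h]
  rw [Finset.sum_congr rfl step, Finset.sum_ite_eq' S.powerset ∅]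
  simp

lemma amul_empty_right (v : MvPolynomial (Fin n) ℚ) (x : SA n) :
    amul x (dd ∅ v) = v • x := by
  funext S
  show (∑ T ∈ S.powerset, sgn T (S \ T) • (x T * dd ∅ v (S \ T))) = v * x S
  have step : ∀ T ∈ S.powerset,
      sgn T (S \ T) • (x T * dd ∅ v (S \ T)) =
      if T = S then x S * v else 0 := by
    intro T hT
    by_cases h : T = S
    · subst h; simp [dd, sgn_empty_right]
    · have : S \ T ≠ ∅ := by
        intro h2
        exact h (Finset.Subset.antisymm (Finset.mem_powerset.1 hT)
          (Finset.sdiff_eq_empty_iff_subset.1 h2))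
      simp [dd, this, h]
  rw [Finset.sum_congr rfl step, Finset.sum_ite_eq' S.powerset S]
  simp [mul_comm]

lemma dG_sub (a : Fin n) (x y : SA n) : dG a (x - y) = dG a x - dG a y := by
  funext S; simp [dG]

lemma dG_smul (a : Fin n) (q : ℚ) (x : SA n) : dG a (q • x) = q • dG a x := by
  funext S; simp [dG]

lemma dG_sum (a : Fin n) {ι : Type*} (s : Finset ι) (f : ι → SA n) :
    dG a (∑ i ∈ s, f i) = ∑ i ∈ s, dG a (f i) := by
  funext S; simp [dG]

lemma dL_sub (i : Fin n ⊕ Fin n) (x y : SA n) : dL i (x - y) = dL i x - dL i y := by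
  funext S; simp only [dL, Pi.sub_apply]; split <;> simp [smul_sub]

lemma dL_smul (i : Fin n ⊕ Fin n) (q : ℚ) (x : SA n) : dL i (q • x) = q • dL i x := by
  funext S; simp only [dL, Pi.smul_apply]; split <;> simp [smul_comm _ q]

lemma dL_sum (i : Fin n ⊕ Fin n) {ι : Type*} (s : Finset ι) (f : ι → SA n) :
    dL i (∑ j ∈ s, f j) = ∑ j ∈ s, dL i (f j) := by
  funext S; simp only [dL, Finset.sum_apply]
  split <;> simp [Finset.smul_sum]

lemma dL_zero (i : Fin n ⊕ Fin n) : dL i (0 : SA n) = 0 := by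
  funext S; simp only [dL, Pi.zero_apply]; split <;> simp

lemma dR_sub (i : Fin n ⊕ Fin n) (x y : SA n) : dR i (x - y) = dR i x - dR i y := by
  funext S; simp only [dR, Pi.sub_apply]; split <;> simp [smul_sub]

lemma dR_smul (i : Fin n ⊕ Fin n) (q : ℚ) (x : SA n) : dR i (q • x) = q • dR i x := by
  funext S; simp only [dR, Pi.smul_apply]; split <;> simp [smul_comm _ q]

lemma dR_sum (i : Fin n ⊕ Fin n) {ι : Type*} (s : Finset ι) (f : ι → SA n) :
    dR i (∑ j ∈ s, f j) = ∑ j ∈ s, dR i (f j) := by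
  funext S; simp only [dR, Finset.sum_apply]
  split <;> simp [Finset.smul_sum]

lemma dR_zero (i : Fin n ⊕ Fin n) : dR i (0 : SA n) = 0 := by
  funext S; simp only [dR, Pi.zero_apply]; split <;> simp

end Found3
section Found4
variable {n : ℕ}

/-- sign helper -/
def χ (b c : Fin n) : ℚ := if b < c then -1 else 1

lemma χ_swap {b c : Fin n} (h : b ≠ c) : χ b c = -χ c b := by
  rcases lt_or_gt_of_ne h with h' | h'
  · simp [χ, h', not_lt_of_gt h']
  · simp [χ, h', not_lt_of_gt h']

lemma hGg (a : Fin n) : Gg a = dd ∅ (X (R := ℚ) a) := rfl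
lemma hηg (a : Fin n) : ηg a = dd {Sum.inl a} (1 : MvPolynomial (Fin n) ℚ) := rfl
lemma hPg (a : Fin n) : Pg a = dd {Sum.inr a} (1 : MvPolynomial (Fin n) ℚ) := rfl

lemma sgn_ll (c b : Fin n) : sgn {Sum.inl c} ({Sum.inl b} : Finset (Fin n ⊕ Fin n)) = χ b c := by
  rw [sgn_single]
  simp [idx, χ]

lemma sgn_lr (m a : Fin n) : sgn {Sum.inl m} ({Sum.inr a} : Finset (Fin n ⊕ Fin n)) = 1 := by
  rw [sgn_single]
  have : ¬ (idx (Sum.inr a : Fin n ⊕ Fin n) < idx (Sum.inl m : Fin n ⊕ Fin n)) := by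
    simp [idx]; omega
  simp [this]

lemma sgn_rl (a m : Fin n) : sgn {Sum.inr a} ({Sum.inl m} : Finset (Fin n ⊕ Fin n)) = -1 := by
  rw [sgn_single]
  have : idx (Sum.inl m : Fin n ⊕ Fin n) < idx (Sum.inr a : Fin n ⊕ Fin n) := by
    simp [idx]; omega
  simp [this]

lemma hGη (a : Fin n) : amul (Gg a) (ηg a) = dd {Sum.inl a} (X (R := ℚ) a) := by
  rw [hGg, hηg, amul_dd]
  simp [sgn_empty_left]

lemma hηη (c b : Fin n) : amul (ηg c) (ηg b) =
    if c = b then 0 else dd ({Sum.inl c} ∪ {Sum.inl b}) (χ b c • 1) := by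
  rw [hηg, hηg, amul_dd, sgn_ll]
  by_cases h : c = b
  · simp [h]
  · have : Disjoint ({Sum.inl c} : Finset (Fin n ⊕ Fin n)) {Sum.inl b} := by
      simp [Finset.disjoint_singleton, Ne.symm h, h]
    simp [this, h]

lemma hηP (m a : Fin n) : amul (ηg m) (Pg a) =
    dd ({Sum.inl m} ∪ {Sum.inr a}) (1 : MvPolynomial (Fin n) ℚ) := by
  rw [hηg, hPg, amul_dd, sgn_lr]
  have : Disjoint ({Sum.inl m} : Finset (Fin n ⊕ Fin n)) {Sum.inr a} := by
    simp [Finset.disjoint_singleton]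
  simp [this]

lemma hW (a b c : Fin n) : amul (Pg a) (amul (ηg c) (ηg b)) =
    if c = b then 0 else
      dd ({Sum.inr a} ∪ ({Sum.inl c} ∪ {Sum.inl b})) (χ b c • 1) := by
  rw [hηη]
  by_cases h : c = b
  · simp [h, amul_zero_right]
  · rw [if_neg h, if_neg h, hPg, amul_dd]
    have hdcb : Disjoint ({Sum.inl c} : Finset (Fin n ⊕ Fin n)) {Sum.inl b} := by
      simp [Finset.disjoint_singleton, Ne.symm h, h]
    have hd : Disjoint ({Sum.inr a} : Finset (Fin n ⊕ Fin n)) ({Sum.inl c} ∪ {Sum.inl b}) := by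
      simp [Finset.disjoint_left]
    rw [if_pos hd, sgn_union_right _ hdcb, sgn_rl, sgn_rl]
    norm_num

lemma hQuad (a m b c : Fin n) :
    amul (amul (ηg c) (ηg b)) (amul (ηg m) (Pg a)) =
    if c = b ∨ m = c ∨ m = b then 0 else
      dd (({Sum.inl c} ∪ {Sum.inl b}) ∪ ({Sum.inl m} ∪ {Sum.inr a}))
        ((χ b c * (χ m c * χ m b)) • 1) := by
  rw [hηη, hηP]
  by_cases h : c = b
  · simp [h, amul_zero_left]
  · rw [if_neg h, amul_dd]
    by_cases h2 : m = c ∨ m = b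
    · have : ¬ Disjoint (({Sum.inl c} : Finset (Fin n ⊕ Fin n)) ∪ {Sum.inl b})
          ({Sum.inl m} ∪ {Sum.inr a}) := by
        rcases h2 with h2 | h2 <;> subst h2 <;> simp [Finset.disjoint_left]
      simp [this, h, h2]
    · push_neg at h2
      have hdcb : Disjoint ({Sum.inl c} : Finset (Fin n ⊕ Fin n)) {Sum.inl b} := by
        simp [Finset.disjoint_singleton, Ne.symm h, h]
      have hd : Disjoint (({Sum.inl c} : Finset (Fin n ⊕ Fin n)) ∪ {Sum.inl b})
          ({Sum.inl m} ∪ {Sum.inr a}) := by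
        simp [Finset.disjoint_left]
        exact ⟨fun hh => h2.1 hh.symm, fun hh => h2.2 hh.symm⟩
      rw [if_pos hd, if_neg (by tauto), sgn_union_left _ hdcb,
        sgn_union_right _ (by simp [Finset.disjoint_singleton]),
        sgn_union_right _ (by simp [Finset.disjoint_singleton]),
        sgn_ll, sgn_ll, sgn_lr, sgn_lr]
    -- coefficient: ((χ m c * 1) * (χ m b * 1)) • ((χ b c • 1) * 1) = (χ b c * (χ m c * χ m b)) • 1
      rw [mul_one, mul_one, mul_one, smul_smul]
      ring_nf

end Found4
section Found5
variable {n : ℕ}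

lemma h4comm (a m b c : Fin n) :
    amul (amul (ηg m) (Pg a)) (amul (ηg c) (ηg b)) =
    amul (amul (ηg c) (ηg b)) (amul (ηg m) (Pg a)) := by
  rw [hQuad, hηη, hηP]
  by_cases h : c = b
  · simp [h, amul_zero_right]
  · rw [if_neg h, amul_dd]
    by_cases h2 : m = c ∨ m = b
    · have hnd : ¬ Disjoint (({Sum.inl m} : Finset (Fin n ⊕ Fin n)) ∪ {Sum.inr a})
          ({Sum.inl c} ∪ {Sum.inl b}) := by
        rcases h2 with h2 | h2 <;> subst h2 <;>
          exact Finset.not_disjoint_iff.2 ⟨Sum.inl m, by simp, by simp⟩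
      rw [if_neg hnd, if_pos (by tauto)]
    · push_neg at h2
      have hd : Disjoint (({Sum.inl m} : Finset (Fin n ⊕ Fin n)) ∪ {Sum.inr a})
          ({Sum.inl c} ∪ {Sum.inl b}) := by
        rw [Finset.disjoint_left]
        rintro x hx hx'
        simp at hx hx'
        rcases hx with rfl | rfl <;> rcases hx' with h' | h' <;> simp_all
      rw [if_pos hd, if_neg (by tauto)]
      have hset : (({Sum.inl m} : Finset (Fin n ⊕ Fin n)) ∪ {Sum.inr a}) ∪
          ({Sum.inl c} ∪ {Sum.inl b}) =
          (({Sum.inl c} ∪ {Sum.inl b}) ∪ ({Sum.inl m} ∪ {Sum.inr a})) := by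
        ext x; simp; tauto
      rw [hset, sgn_union_left _ (by simp [Finset.disjoint_singleton]),
        sgn_union_right _ (by simp [Finset.disjoint_singleton, Ne.symm h, h]),
        sgn_union_right _ (by simp [Finset.disjoint_singleton, Ne.symm h, h]),
        sgn_ll, sgn_ll, sgn_rl, sgn_rl, one_mul, smul_smul]
      rw [χ_swap h2.1, χ_swap h2.2]
      congr 1
      ring

lemma hcyc (a m b c : Fin n) :
    amul (amul (ηg c) (ηg b)) (amul (ηg m) (Pg a)) =
    amul (amul (ηg m) (ηg c)) (amul (ηg b) (Pg a)) := by
  rw [hQuad a m b c, hQuad a b c m]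
  by_cases h : c = b ∨ m = c ∨ m = b
  · rw [if_pos h, if_pos (by tauto)]
  · rw [if_neg h, if_neg (by tauto)]
    push_neg at h
    obtain ⟨h1, h2, h3⟩ := h
    have hset : ((({Sum.inl c} : Finset (Fin n ⊕ Fin n)) ∪ {Sum.inl b}) ∪
        ({Sum.inl m} ∪ {Sum.inr a})) =
        (({Sum.inl m} ∪ {Sum.inl c}) ∪ ({Sum.inl b} ∪ {Sum.inr a})) := by
      ext x; simp; tauto
    rw [hset, χ_swap h2, χ_swap h3]
    congr 2
    ring

end Found5
section Found6
variable {n : ℕ}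

lemma dG_zero (a : Fin n) : dG a (0 : SA n) = 0 := by
  funext S; simp [dG]

lemma sum_if_collapse {β : Type*} [AddCommMonoid β] {n' : ℕ} (e : Fin n') (f : Fin n' → β) :
    (∑ a, if a = e then f a else 0) = f e := by
  rw [Finset.sum_ite_eq' Finset.univ e f]; simp

lemma pderiv_smul_one (a : Fin n) (q : ℚ) :
    (pderiv a) (q • (1 : MvPolynomial (Fin n) ℚ)) = 0 := by
  rw [MvPolynomial.smul_eq_C_mul, mul_one, pderiv_C]

variable (Cc : Fin n → Fin n → Fin n → ℚ)

/-- The BRST charge as an expression. -/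
noncomputable def Ωe : SA n :=
  (∑ a, amul (Gg a) (ηg a))
    - (1/2 : ℚ) • ∑ a, ∑ b, ∑ c, Cc a b c • amul (Pg a) (amul (ηg c) (ηg b))

lemma hdG (a : Fin n) : dG a (Ωe Cc) = ηg a := by
  unfold Ωe
  have h1 : ∀ a' : Fin n, dG a (amul (Gg a') (ηg a')) = if a' = a then ηg a else 0 := by
    intro a'
    rw [hGη, dG_dd]
    by_cases h : a' = a
    · subst h; rw [if_pos rfl, pderiv_X_self, hηg]
    · rw [if_neg h, pderiv_X_of_ne h, dd_zero]
  have h2 : ∀ a' b c : Fin n, dG a (Cc a' b c • amul (Pg a') (amul (ηg c) (ηg b))) = 0 := by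
    intro a' b c
    rw [dG_smul, hW]
    by_cases h : c = b
    · rw [if_pos h, dG_zero, smul_zero]
    · rw [if_neg h, dG_dd, pderiv_smul_one, dd_zero, smul_zero]
  simp only [dG_sub, dG_smul, dG_sum, h1, h2, sum_if_collapse, Finset.sum_const_zero,
    smul_zero, sub_zero]

lemma erase_T_inr (a b c : Fin n) :
    (({Sum.inr a} ∪ ({Sum.inl c} ∪ {Sum.inl b}) : Finset (Fin n ⊕ Fin n))).erase (Sum.inr a)
      = {Sum.inl c} ∪ {Sum.inl b} := by
  ext x
  simp only [Finset.mem_erase, Finset.mem_union, Finset.mem_singleton]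
  constructor
  · tauto
  · rintro (rfl | rfl) <;> simp

lemma keyBR (e : Fin n) (a b c : Fin n) :
    dR (Sum.inr e) (amul (Pg a) (amul (ηg c) (ηg b))) =
      if a = e then amul (ηg c) (ηg b) else 0 := by
  rw [hW]
  by_cases hcb : c = b
  · rw [if_pos hcb, dR_zero, hηη, if_pos hcb, ite_self]
  · rw [if_neg hcb, dR_dd]
    by_cases hae : a = e
    · subst hae
      rw [if_pos (by simp), erase_T_inr]
      have hfil : (({Sum.inl c} ∪ {Sum.inl b} : Finset (Fin n ⊕ Fin n)).filter
          (fun j => idx (Sum.inr a : Fin n ⊕ Fin n) < idx j)) = ∅ := by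
        ext x
        simp only [Finset.mem_filter, Finset.mem_union, Finset.mem_singleton,
          Finset.notMem_empty, iff_false, not_and]
        rintro (rfl | rfl) <;> simp [idx] <;> omega
      rw [hfil, hηη, if_neg hcb, if_pos rfl]
      simp
    · rw [if_neg (by simp [Ne.symm, hae]), if_neg hae]

lemma keyBL (e : Fin n) (a b c : Fin n) :
    dL (Sum.inr e) (amul (Pg a) (amul (ηg c) (ηg b))) =
      if a = e then amul (ηg c) (ηg b) else 0 := by
  rw [hW]
  by_cases hcb : c = b
  · rw [if_pos hcb, dL_zero, hηη, if_pos hcb, ite_self]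
  · rw [if_neg hcb, dL_dd]
    by_cases hae : a = e
    · subst hae
      rw [if_pos (by simp), erase_T_inr]
      have hfil : (({Sum.inl c} ∪ {Sum.inl b} : Finset (Fin n ⊕ Fin n)).filter
          (fun j => idx j < idx (Sum.inr a : Fin n ⊕ Fin n))) =
          {Sum.inl c} ∪ {Sum.inl b} := by
        ext x
        simp only [Finset.mem_filter, Finset.mem_union, Finset.mem_singleton,
          and_iff_left_iff_imp]
        rintro (rfl | rfl) <;> simp [idx] <;> omega
      have hcard : (({Sum.inl c} : Finset (Fin n ⊕ Fin n)) ∪ {Sum.inl b}).card = 2 := by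
        rw [Finset.card_union_of_disjoint
          (by simp only [Finset.disjoint_singleton, ne_eq, Sum.inl.injEq]; exact hcb)]
        simp
      rw [hfil, hcard, hηη, if_neg hcb, if_pos rfl]
      norm_num
    · rw [if_neg (by simp [Ne.symm, hae]), if_neg hae]

lemma hdBR (e : Fin n) : dR (Sum.inr e) (Ωe Cc) =
    (-(1/2) : ℚ) • ∑ b, ∑ c, Cc e b c • amul (ηg c) (ηg b) := by
  unfold Ωe
  have h1 : ∀ a' : Fin n, dR (Sum.inr e) (amul (Gg a') (ηg a')) = 0 := by
    intro a'
    rw [hGη, dR_dd, if_neg (by simp)]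
  simp only [dR_sub, dR_smul, dR_sum, h1, keyBR, Finset.sum_const_zero, zero_sub]
  have h2 : ∀ a : Fin n, (∑ b, ∑ c, Cc a b c • if a = e then amul (ηg c) (ηg b) else 0)
      = if a = e then (∑ b, ∑ c, Cc a b c • amul (ηg c) (ηg b)) else 0 :=
    fun a => by by_cases h : a = e <;> simp [h]
  simp only [h2, sum_if_collapse e (fun a => ∑ b, ∑ c, Cc a b c • amul (ηg c) (ηg b)), neg_smul]

lemma hdBL (e : Fin n) : dL (Sum.inr e) (Ωe Cc) =
    (-(1/2) : ℚ) • ∑ b, ∑ c, Cc e b c • amul (ηg c) (ηg b) := by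
  unfold Ωe
  have h1 : ∀ a' : Fin n, dL (Sum.inr e) (amul (Gg a') (ηg a')) = 0 := by
    intro a'
    rw [hGη, dL_dd, if_neg (by simp)]
  simp only [dL_sub, dL_smul, dL_sum, h1, keyBL, Finset.sum_const_zero, zero_sub]
  have h2 : ∀ a : Fin n, (∑ b, ∑ c, Cc a b c • if a = e then amul (ηg c) (ηg b) else 0)
      = if a = e then (∑ b, ∑ c, Cc a b c • amul (ηg c) (ηg b)) else 0 :=
    fun a => by by_cases h : a = e <;> simp [h]
  simp only [h2, sum_if_collapse e (fun a => ∑ b, ∑ c, Cc a b c • amul (ηg c) (ηg b)), neg_smul]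

end Found6
section Found7
variable {n : ℕ}

lemma dd_union_comm (A B : Finset (Fin n ⊕ Fin n)) (v : MvPolynomial (Fin n) ℚ) :
    dd (A ∪ B) v = dd (B ∪ A) v := by rw [Finset.union_comm]

lemma erase_T_inl_c (a b c : Fin n) (hcb : ¬ c = b) :
    (({Sum.inr a} ∪ ({Sum.inl c} ∪ {Sum.inl b}) : Finset (Fin n ⊕ Fin n))).erase (Sum.inl c)
      = {Sum.inr a} ∪ {Sum.inl b} := by
  ext x
  simp only [Finset.mem_erase, Finset.mem_union, Finset.mem_singleton]
  constructor
  · rintro ⟨h1, (h2 | h2 | h2)⟩ <;> tauto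
  · rintro (rfl | rfl)
    · exact ⟨by simp, Or.inl rfl⟩
    · refine ⟨?_, Or.inr (Or.inr rfl)⟩
      simp only [ne_eq, Sum.inl.injEq]
      exact fun hh => hcb hh.symm

lemma erase_T_inl_b (a b c : Fin n) (hcb : ¬ c = b) :
    (({Sum.inr a} ∪ ({Sum.inl c} ∪ {Sum.inl b}) : Finset (Fin n ⊕ Fin n))).erase (Sum.inl b)
      = {Sum.inr a} ∪ {Sum.inl c} := by
  ext x
  simp only [Finset.mem_erase, Finset.mem_union, Finset.mem_singleton]
  constructor
  · rintro ⟨h1, (h2 | h2 | h2)⟩ <;> tauto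
  · rintro (rfl | rfl)
    · exact ⟨by simp, Or.inl rfl⟩
    · refine ⟨?_, Or.inr (Or.inl rfl)⟩
      simp only [ne_eq, Sum.inl.injEq]
      exact hcb

lemma filter_lt_pair (a m e : Fin n) :
    (({Sum.inr a} ∪ {Sum.inl m} : Finset (Fin n ⊕ Fin n)).filter
      (fun j => idx j < idx (Sum.inl e : Fin n ⊕ Fin n))).card = if m < e then 1 else 0 := by
  rw [Finset.filter_union, Finset.filter_singleton, Finset.filter_singleton]
  have h1 : ¬ (idx (Sum.inr a : Fin n ⊕ Fin n) < idx (Sum.inl e : Fin n ⊕ Fin n)) := by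
    simp only [idx]; omega
  have h2 : (idx (Sum.inl m : Fin n ⊕ Fin n) < idx (Sum.inl e : Fin n ⊕ Fin n)) ↔ m < e := by
    simp only [idx]; exact Fin.lt_iff_val_lt_val.symm
  rw [if_neg h1]
  by_cases h : m < e
  · rw [if_pos (h2.2 h), if_pos h]; simp
  · rw [if_neg (fun hh => h (h2.1 hh)), if_neg h]; simp

lemma filter_gt_pair (a m e : Fin n) :
    (({Sum.inr a} ∪ {Sum.inl m} : Finset (Fin n ⊕ Fin n)).filter
      (fun j => idx (Sum.inl e : Fin n ⊕ Fin n) < idx j)).card = if e < m then 2 else 1 := by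
  rw [Finset.filter_union, Finset.filter_singleton, Finset.filter_singleton]
  have h1 : (idx (Sum.inl e : Fin n ⊕ Fin n) < idx (Sum.inr a : Fin n ⊕ Fin n)) := by
    simp only [idx]; omega
  have h2 : (idx (Sum.inl e : Fin n ⊕ Fin n) < idx (Sum.inl m : Fin n ⊕ Fin n)) ↔ e < m := by
    simp only [idx]; exact Fin.lt_iff_val_lt_val.symm
  rw [if_pos h1]
  by_cases h : e < m
  · rw [if_pos (h2.2 h)]
    rw [Finset.card_union_of_disjoint (by simp)]
    simp [h]
  · rw [if_neg (fun hh => h (h2.1 hh))]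
    simp [h]

lemma dL_W_c (a b c : Fin n) (hcb : ¬ c = b) :
    dL (Sum.inl c) (amul (Pg a) (amul (ηg c) (ηg b))) = amul (ηg b) (Pg a) := by
  rw [hW, if_neg hcb, dL_dd, if_pos (by simp), erase_T_inl_c a b c hcb, hηP,
    filter_lt_pair a b c, smul_dd, dd_union_comm, smul_smul]
  congr 1
  have hx : ((-1:ℚ)^(if b < c then 1 else 0) * χ b c) = 1 := by
    unfold χ
    by_cases h1 : b < c <;> simp [h1]
  rw [hx, one_smul]

lemma dL_W_b (a b c : Fin n) (hcb : ¬ c = b) :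
    dL (Sum.inl b) (amul (Pg a) (amul (ηg c) (ηg b))) = (-1 : ℚ) • amul (ηg c) (Pg a) := by
  rw [hW, if_neg hcb, dL_dd, if_pos (by simp), erase_T_inl_b a b c hcb, hηP,
    filter_lt_pair a c b, smul_dd, dd_union_comm, smul_dd, smul_smul]
  congr 1
  have hbc : b ≠ c := fun hh => hcb hh.symm
  have hx : ((-1:ℚ)^(if c < b then 1 else 0) * χ b c) = -1 := by
    unfold χ
    rcases lt_or_gt_of_ne hbc with h' | h'
    · simp [h', not_lt_of_gt h']
    · simp [h', not_lt_of_gt h']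
  rw [hx]

lemma dL_W_0 (e a b c : Fin n) (hec : ¬ e = c) (heb : ¬ e = b) :
    dL (Sum.inl e) (amul (Pg a) (amul (ηg c) (ηg b))) = 0 := by
  rw [hW]
  by_cases hcb : c = b
  · rw [if_pos hcb, dL_zero]
  · rw [if_neg hcb, dL_dd, if_neg (by simp [hec, heb])]

lemma dR_W_c (a b c : Fin n) (hcb : ¬ c = b) :
    dR (Sum.inl c) (amul (Pg a) (amul (ηg c) (ηg b))) = amul (ηg b) (Pg a) := by
  rw [hW, if_neg hcb, dR_dd, if_pos (by simp), erase_T_inl_c a b c hcb, hηP,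
    filter_gt_pair a b c, smul_dd, dd_union_comm, smul_smul]
  congr 1
  have hbc : b ≠ c := fun hh => hcb hh.symm
  have hx : ((-1:ℚ)^(if c < b then 2 else 1) * χ b c) = 1 := by
    unfold χ
    rcases lt_or_gt_of_ne hbc with h' | h'
    · simp [h', not_lt_of_gt h']
    · simp [h', not_lt_of_gt h']
  rw [hx, one_smul]

lemma dR_W_b (a b c : Fin n) (hcb : ¬ c = b) :
    dR (Sum.inl b) (amul (Pg a) (amul (ηg c) (ηg b))) = (-1 : ℚ) • amul (ηg c) (Pg a) := by
  rw [hW, if_neg hcb, dR_dd, if_pos (by simp), erase_T_inl_b a b c hcb, hηP,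
    filter_gt_pair a c b, smul_dd, dd_union_comm, smul_dd, smul_smul]
  congr 1
  have hbc : b ≠ c := fun hh => hcb hh.symm
  have hx : ((-1:ℚ)^(if b < c then 2 else 1) * χ b c) = -1 := by
    unfold χ
    rcases lt_or_gt_of_ne hbc with h' | h'
    · simp [h', not_lt_of_gt h']
    · simp [h', not_lt_of_gt h']
  rw [hx]

lemma dR_W_0 (e a b c : Fin n) (hec : ¬ e = c) (heb : ¬ e = b) :
    dR (Sum.inl e) (amul (Pg a) (amul (ηg c) (ηg b))) = 0 := by
  rw [hW]
  by_cases hcb : c = b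
  · rw [if_pos hcb, dR_zero]
  · rw [if_neg hcb, dR_dd, if_neg (by simp [hec, heb])]

end Found7
section Found8
variable {n : ℕ} (Cc : Fin n → Fin n → Fin n → ℚ)

lemma smul_if_zero (q : ℚ) (P : Prop) [Decidable P] (x : SA n) :
    q • (if P then x else 0) = if P then q • x else 0 := by
  split <;> simp

lemma keyAL (e a b c : Fin n) :
    dL (Sum.inl e) (amul (Pg a) (amul (ηg c) (ηg b))) =
      (if c = e then amul (ηg b) (Pg a) else 0)
        + (if b = e then (-1 : ℚ) • amul (ηg c) (Pg a) else 0) := by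
  by_cases hcb : c = b
  · subst hcb
    rw [hW, if_pos rfl, dL_zero]
    by_cases h : c = e <;> simp [h]
  · by_cases hce : c = e
    · subst hce
      rw [dL_W_c a b c hcb, if_pos rfl, if_neg (fun hh => hcb hh.symm), add_zero]
    · by_cases hbe : b = e
      · subst hbe
        rw [dL_W_b a b c hcb, if_neg hcb, if_pos rfl, zero_add]
      · rw [dL_W_0 e a b c (fun hh => hce hh.symm) (fun hh => hbe hh.symm),
          if_neg hce, if_neg hbe, add_zero]

lemma keyAR (e a b c : Fin n) :
    dR (Sum.inl e) (amul (Pg a) (amul (ηg c) (ηg b))) =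
      (if c = e then amul (ηg b) (Pg a) else 0)
        + (if b = e then (-1 : ℚ) • amul (ηg c) (Pg a) else 0) := by
  by_cases hcb : c = b
  · subst hcb
    rw [hW, if_pos rfl, dR_zero]
    by_cases h : c = e <;> simp [h]
  · by_cases hce : c = e
    · subst hce
      rw [dR_W_c a b c hcb, if_pos rfl, if_neg (fun hh => hcb hh.symm), add_zero]
    · by_cases hbe : b = e
      · subst hbe
        rw [dR_W_b a b c hcb, if_neg hcb, if_pos rfl, zero_add]
      · rw [dR_W_0 e a b c (fun hh => hce hh.symm) (fun hh => hbe hh.symm),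
          if_neg hce, if_neg hbe, add_zero]

lemma hsumA (hanti : ∀ a b c, Cc a b c = - Cc a c b) (e : Fin n) :
    (∑ a, ∑ b, ∑ c, Cc a b c • ((if c = e then amul (ηg b) (Pg a) else 0)
        + (if b = e then (-1 : ℚ) • amul (ηg c) (Pg a) else 0)))
      = ∑ a, ∑ m, (-2 : ℚ) • (Cc a e m • amul (ηg m) (Pg a)) := by
  refine Finset.sum_congr rfl fun a _ => ?_
  have h1 : ∀ b : Fin n,
      (∑ c, Cc a b c • ((if c = e then amul (ηg b) (Pg a) else 0)
        + (if b = e then (-1 : ℚ) • amul (ηg c) (Pg a) else 0)))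
      = Cc a b e • amul (ηg b) (Pg a)
        + (if b = e then ∑ c, Cc a b c • ((-1 : ℚ) • amul (ηg c) (Pg a)) else 0) := by
    intro b
    rw [Finset.sum_congr rfl (fun c _ => smul_add (Cc a b c) _ _), Finset.sum_add_distrib]
    congr 1
    · simp only [smul_if_zero]
      rw [sum_if_collapse e (fun c => Cc a b c • amul (ηg b) (Pg a))]
    · by_cases h : b = e
      · simp [h]
      · simp [h]
  rw [Finset.sum_congr rfl (fun b _ => h1 b), Finset.sum_add_distrib,
    sum_if_collapse e (fun b => ∑ c, Cc a b c • ((-1 : ℚ) • amul (ηg c) (Pg a))),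
    ← Finset.sum_add_distrib]
  refine Finset.sum_congr rfl fun m _ => ?_
  rw [hanti a m e]
  module

lemma hdAL (hanti : ∀ a b c, Cc a b c = - Cc a c b) (e : Fin n) :
    dL (Sum.inl e) (Ωe Cc) = dd ∅ (X e) + ∑ a, ∑ m, Cc a e m • amul (ηg m) (Pg a) := by
  unfold Ωe
  have hA : ∀ a' : Fin n, dL (Sum.inl e) (amul (Gg a') (ηg a'))
      = if a' = e then dd ∅ (X (R := ℚ) a') else 0 := by
    intro a'
    rw [hGη, dL_dd]
    by_cases h : a' = e
    · subst h
      rw [if_pos (by simp), if_pos rfl]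
      simp
    · rw [if_neg (by simp only [Finset.mem_singleton, Sum.inl.injEq]; exact fun hh => h hh.symm),
        if_neg h]
  simp only [dL_sub, dL_smul, dL_sum, hA, keyAL, sum_if_collapse e (fun a' => dd ∅ (X (R := ℚ) a'))]
  rw [hsumA Cc hanti e]
  simp only [Finset.smul_sum, smul_smul]
  norm_num
  refine Finset.sum_congr rfl fun a _ => Finset.sum_congr rfl fun m _ => ?_
  congr 1
  ring

lemma hdAR (hanti : ∀ a b c, Cc a b c = - Cc a c b) (e : Fin n) :
    dR (Sum.inl e) (Ωe Cc) = dd ∅ (X e) + ∑ a, ∑ m, Cc a e m • amul (ηg m) (Pg a) := by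
  unfold Ωe
  have hA : ∀ a' : Fin n, dR (Sum.inl e) (amul (Gg a') (ηg a'))
      = if a' = e then dd ∅ (X (R := ℚ) a') else 0 := by
    intro a'
    rw [hGη, dR_dd]
    by_cases h : a' = e
    · subst h
      rw [if_pos (by simp), if_pos rfl]
      simp
    · rw [if_neg (by simp only [Finset.mem_singleton, Sum.inl.injEq]; exact fun hh => h hh.symm),
        if_neg h]
  simp only [dR_sub, dR_smul, dR_sum, hA, keyAR, sum_if_collapse e (fun a' => dd ∅ (X (R := ℚ) a'))]
  rw [hsumA Cc hanti e]
  simp only [Finset.smul_sum, smul_smul]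
  norm_num
  refine Finset.sum_congr rfl fun a _ => Finset.sum_congr rfl fun m _ => ?_
  congr 1
  ring

end Found8
section Found9
variable {n : ℕ} (Cc : Fin n → Fin n → Fin n → ℚ)

lemma rot3 {β : Type*} [AddCommMonoid β] (h : Fin n → Fin n → Fin n → β) :
    (∑ x, ∑ y, ∑ z, h x y z) = ∑ y, ∑ z, ∑ x, h x y z := by
  rw [Finset.sum_comm]
  exact Finset.sum_congr rfl fun y _ => Finset.sum_comm

lemma cyc3 {β : Type*} [AddCommMonoid β] (g : Fin n → Fin n → Fin n → β) :
    (∑ x, ∑ y, ∑ z, g x y z) = ∑ x, ∑ y, ∑ z, g z x y := by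
  calc (∑ x, ∑ y, ∑ z, g x y z) = ∑ y, ∑ z, ∑ x, g x y z := rot3 g
    _ = ∑ x, ∑ y, ∑ z, g z x y := rfl

lemma move_in5 {β : Type*} [AddCommMonoid β]
    (f : Fin n → Fin n → Fin n → Fin n → Fin n → β) :
    (∑ e, ∑ b, ∑ c, ∑ a, ∑ m, f e b c a m) = ∑ b, ∑ c, ∑ a, ∑ m, ∑ e, f e b c a m := by
  rw [Finset.sum_comm]
  refine Finset.sum_congr rfl fun b _ => ?_
  rw [Finset.sum_comm]
  refine Finset.sum_congr rfl fun c _ => ?_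
  rw [Finset.sum_comm]
  refine Finset.sum_congr rfl fun a _ => ?_
  exact Finset.sum_comm

/-- quartic ghost terms -/
noncomputable def SQ1 (e : Fin n) : SA n :=
  ∑ b, ∑ c, Cc e b c • ∑ a, ∑ m, Cc a e m •
    amul (amul (ηg c) (ηg b)) (amul (ηg m) (Pg a))

noncomputable def SQ2 (e : Fin n) : SA n :=
  ∑ a, ∑ m, Cc a e m • ∑ b, ∑ c, Cc e b c •
    amul (amul (ηg c) (ηg b)) (amul (ηg m) (Pg a))

lemma hBsAs (e : Fin n) :
    amul (∑ b, ∑ c, Cc e b c • amul (ηg c) (ηg b))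
      (∑ a, ∑ m, Cc a e m • amul (ηg m) (Pg a)) = SQ2 Cc e := by
  unfold SQ2
  simp only [amul_sum_left, amul_smul_left, amul_sum_right, amul_smul_right]

lemma hAsBs (e : Fin n) :
    amul (∑ a, ∑ m, Cc a e m • amul (ηg m) (Pg a))
      (∑ b, ∑ c, Cc e b c • amul (ηg c) (ηg b)) = SQ1 Cc e := by
  unfold SQ1
  simp only [amul_sum_left, amul_smul_left, amul_sum_right, amul_smul_right, h4comm]

lemma hper (e : Fin n) :
    amul ((-(1/2) : ℚ) • ∑ b, ∑ c, Cc e b c • amul (ηg c) (ηg b))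
        (dd ∅ (X (R := ℚ) e) + ∑ a, ∑ m, Cc a e m • amul (ηg m) (Pg a))
      + amul (dd ∅ (X (R := ℚ) e) + ∑ a, ∑ m, Cc a e m • amul (ηg m) (Pg a))
        ((-(1/2) : ℚ) • ∑ b, ∑ c, Cc e b c • amul (ηg c) (ηg b))
    = (-1 : ℚ) • (X (R := ℚ) e • (∑ b, ∑ c, Cc e b c • amul (ηg c) (ηg b)))
      + ((-(1/2) : ℚ) • SQ1 Cc e + (-(1/2) : ℚ) • SQ2 Cc e) := by
  rw [amul_smul_left, amul_smul_right, amul_add_right, amul_add_left,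
    amul_empty_right, amul_empty_left, hBsAs, hAsBs, smul_add, smul_add]
  have hh : ∀ (u v w : SA n), ((-(1/2):ℚ) • u + (-(1/2):ℚ) • v) + ((-(1/2):ℚ) • u + (-(1/2):ℚ) • w)
      = (-1:ℚ) • u + ((-(1/2):ℚ) • w + (-(1/2):ℚ) • v) := by
    intro u v w
    rw [show (-1:ℚ) = (-(1/2)) + (-(1/2)) by norm_num, add_smul]
    abel
  exact hh _ _ _

lemma hcoef (hanti : ∀ a b c, Cc a b c = - Cc a c b)
    (hjac : ∀ e a b c,
      ∑ d, (Cc e a d * Cc d b c + Cc e b d * Cc d c a + Cc e c d * Cc d a b) = 0)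
    (a m b c : Fin n) :
    (∑ e, Cc a e m * Cc e b c) + (∑ e, Cc a e c * Cc e m b)
      + (∑ e, Cc a e b * Cc e c m) = 0 := by
  rw [← Finset.sum_add_distrib, ← Finset.sum_add_distrib]
  have step : ∀ e : Fin n, Cc a e m * Cc e b c + Cc a e c * Cc e m b + Cc a e b * Cc e c m
      = -(Cc a m e * Cc e b c + Cc a b e * Cc e c m + Cc a c e * Cc e m b) := by
    intro e
    rw [hanti a e m, hanti a e c, hanti a e b]
    ring
  rw [Finset.sum_congr rfl fun e _ => step e, Finset.sum_neg_distrib, hjac a m b c, neg_zero]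

lemma coreSym (hanti : ∀ a b c, Cc a b c = - Cc a c b)
    (hjac : ∀ e a b c,
      ∑ d, (Cc e a d * Cc d b c + Cc e b d * Cc d c a + Cc e c d * Cc d a b) = 0)
    (a : Fin n) :
    (∑ m, ∑ b, ∑ c, (∑ e, Cc a e m * Cc e b c) •
      amul (amul (ηg c) (ηg b)) (amul (ηg m) (Pg a))) = 0 := by
  set g : Fin n → Fin n → Fin n → SA n := fun m b c => (∑ e, Cc a e m * Cc e b c) •
      amul (amul (ηg c) (ηg b)) (amul (ηg m) (Pg a)) with hg
  have hS2 : (∑ m, ∑ b, ∑ c, g m b c) = ∑ m, ∑ b, ∑ c, g c m b := cyc3 g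
  have hS3 : (∑ m, ∑ b, ∑ c, g m b c) = ∑ m, ∑ b, ∑ c, g b c m := by
    rw [hS2]; exact cyc3 (fun x y z => g z x y)
  have hzero : (∑ m, ∑ b, ∑ c, (g m b c + g c m b + g b c m)) = 0 := by
    refine Finset.sum_eq_zero fun m _ => Finset.sum_eq_zero fun b _ =>
      Finset.sum_eq_zero fun c _ => ?_
    simp only [hg]
    rw [hcyc a b c m, hcyc a c m b, ← add_smul, ← add_smul, hcoef Cc hanti hjac a m b c,
      zero_smul]
  have h3 : (∑ m, ∑ b, ∑ c, g m b c) + (∑ m, ∑ b, ∑ c, g m b c)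
      + (∑ m, ∑ b, ∑ c, g m b c) = 0 := by
    nth_rewrite 2 [hS2]
    nth_rewrite 2 [hS3]
    rw [← hzero]
    simp only [Finset.sum_add_distrib]
  have h4 : (3 : ℚ) • (∑ m, ∑ b, ∑ c, g m b c) = 0 := by
    rw [show (3 : ℚ) • (∑ m, ∑ b, ∑ c, g m b c) = (∑ m, ∑ b, ∑ c, g m b c)
      + (∑ m, ∑ b, ∑ c, g m b c) + (∑ m, ∑ b, ∑ c, g m b c) from by module]
    exact h3
  calc (∑ m, ∑ b, ∑ c, g m b c) = (3 : ℚ)⁻¹ • ((3 : ℚ) • (∑ m, ∑ b, ∑ c, g m b c)) := by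
        rw [smul_smul]; norm_num
    _ = 0 := by rw [h4, smul_zero]

lemma hQ2tot (hanti : ∀ a b c, Cc a b c = - Cc a c b)
    (hjac : ∀ e a b c,
      ∑ d, (Cc e a d * Cc d b c + Cc e b d * Cc d c a + Cc e c d * Cc d a b) = 0) :
    (∑ e, SQ2 Cc e) = 0 := by
  unfold SQ2
  simp only [Finset.smul_sum, smul_smul]
  rw [move_in5]
  simp only [← Finset.sum_smul]
  exact Finset.sum_eq_zero fun a _ => coreSym Cc hanti hjac a

lemma hQ1tot (hanti : ∀ a b c, Cc a b c = - Cc a c b)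
    (hjac : ∀ e a b c,
      ∑ d, (Cc e a d * Cc d b c + Cc e b d * Cc d c a + Cc e c d * Cc d a b) = 0) :
    (∑ e, SQ1 Cc e) = 0 := by
  unfold SQ1
  simp only [Finset.smul_sum, smul_smul]
  rw [move_in5]
  simp only [← Finset.sum_smul]
  -- now : ∑ b, ∑ c, ∑ a, ∑ m, (∑ e, Cc e b c * Cc a e m) • Q b c m = 0
  have swap : (∑ b, ∑ c, ∑ a, ∑ m, (∑ e, Cc e b c * Cc a e m) •
        amul (amul (ηg c) (ηg b)) (amul (ηg m) (Pg a)))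
      = ∑ a, ∑ b, ∑ c, ∑ m, (∑ e, Cc e b c * Cc a e m) •
        amul (amul (ηg c) (ηg b)) (amul (ηg m) (Pg a)) := by
    calc (∑ b, ∑ c, ∑ a, ∑ m, (∑ e, Cc e b c * Cc a e m) •
        amul (amul (ηg c) (ηg b)) (amul (ηg m) (Pg a)))
        = ∑ b, ∑ a, ∑ c, ∑ m, (∑ e, Cc e b c * Cc a e m) •
        amul (amul (ηg c) (ηg b)) (amul (ηg m) (Pg a)) :=
          Finset.sum_congr rfl fun b _ => Finset.sum_comm
      _ = _ := Finset.sum_comm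
  rw [swap]
  refine Finset.sum_eq_zero fun a _ => ?_
  have hmc : (∑ b, ∑ c, ∑ m, (∑ e, Cc e b c * Cc a e m) •
        amul (amul (ηg c) (ηg b)) (amul (ηg m) (Pg a)))
      = ∑ b, ∑ c, ∑ m, (∑ e, Cc a e m * Cc e b c) •
        amul (amul (ηg c) (ηg b)) (amul (ηg m) (Pg a)) := by
    refine Finset.sum_congr rfl fun b _ => Finset.sum_congr rfl fun c _ =>
      Finset.sum_congr rfl fun m _ => ?_
    congr 1
    exact Finset.sum_congr rfl fun e _ => mul_comm _ _
  rw [hmc, ← rot3 (fun m b c => (∑ e, Cc a e m * Cc e b c) •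
    amul (amul (ηg c) (ηg b)) (amul (ηg m) (Pg a)))]
  exact coreSym Cc hanti hjac a

lemma hI (hanti : ∀ a b c, Cc a b c = - Cc a c b) :
    (∑ a, ∑ b, (∑ c, Cc c a b • X (R := ℚ) c) • amul (ηg a) (ηg b))
      + ∑ e, X (R := ℚ) e • (∑ b, ∑ c, Cc e b c • amul (ηg c) (ηg b)) = 0 := by
  have hT1 : ∀ a b : Fin n, (∑ c, Cc c a b • X (R := ℚ) c) • amul (ηg a) (ηg b)
      = ∑ c, Cc c a b • (X (R := ℚ) c • amul (ηg a) (ηg b)) := by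
    intro a b
    rw [Finset.sum_smul]
    exact Finset.sum_congr rfl fun c _ => smul_assoc _ _ _
  have hU : ∀ e : Fin n, X (R := ℚ) e • (∑ b, ∑ c, Cc e b c • amul (ηg c) (ηg b))
      = ∑ b, ∑ c, Cc e b c • (X (R := ℚ) e • amul (ηg c) (ηg b)) := by
    intro e
    rw [Finset.smul_sum]
    refine Finset.sum_congr rfl fun b _ => ?_
    rw [Finset.smul_sum]
    exact Finset.sum_congr rfl fun c _ => smul_comm _ _ _
  simp only [hT1, hU]
  have hre1 : (∑ a, ∑ b, ∑ c, Cc c a b • (X (R := ℚ) c • amul (ηg a) (ηg b)))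
      = ∑ c, ∑ a, ∑ b, Cc c a b • (X (R := ℚ) c • amul (ηg a) (ηg b)) := by
    calc (∑ a, ∑ b, ∑ c, Cc c a b • (X (R := ℚ) c • amul (ηg a) (ηg b)))
        = ∑ a, ∑ c, ∑ b, Cc c a b • (X (R := ℚ) c • amul (ηg a) (ηg b)) :=
          Finset.sum_congr rfl fun a _ => Finset.sum_comm
      _ = _ := Finset.sum_comm
  have hre2 : (∑ e, ∑ b, ∑ c, Cc e b c • (X (R := ℚ) e • amul (ηg c) (ηg b)))
      = ∑ e, ∑ c, ∑ b, Cc e b c • (X (R := ℚ) e • amul (ηg c) (ηg b)) :=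
    Finset.sum_congr rfl fun e _ => Finset.sum_comm
  rw [hre1, hre2, ← Finset.sum_add_distrib]
  refine Finset.sum_eq_zero fun e _ => ?_
  rw [← Finset.sum_add_distrib]
  refine Finset.sum_eq_zero fun x _ => ?_
  rw [← Finset.sum_add_distrib]
  refine Finset.sum_eq_zero fun y _ => ?_
  rw [hanti e x y]
  module

end Found9

/-- for a Lie algebra with structure constants `C^a_{bc}` (antisymmetric,
satisfying the Jacobi identity), the element
`Ω = G_a η^a - ½ 𝒫_a C^a_{bc} η^c η^b` satisfies `[Ω, Ω] = 0`. -/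
theorem lieAlgebra_brst_nilpotent {n : ℕ} (Cc : Fin n → Fin n → Fin n → ℚ)
    (hanti : ∀ a b c, Cc a b c = - Cc a c b)
    (hjac : ∀ e a b c,
      ∑ d, (Cc e a d * Cc d b c + Cc e b d * Cc d c a + Cc e c d * Cc d a b) = 0) :
    let Ω : SA n := (∑ a, amul (Gg a) (ηg a))
      - (1/2 : ℚ) • ∑ a, ∑ b, ∑ c, Cc a b c • amul (Pg a) (amul (ηg c) (ηg b))
    bra (fun a b => ∑ c, Cc c a b • X c) Ω Ω = 0 := by
  intro Ω
  have hΩ : Ω = Ωe Cc := rfl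
  rw [hΩ]
  unfold bra
  simp only [hdG Cc, hdBR Cc, hdBL Cc, hdAL Cc hanti, hdAR Cc hanti]
  simp only [hper Cc]
  rw [Finset.sum_add_distrib, Finset.sum_add_distrib]
  simp only [← Finset.smul_sum]
  rw [hQ1tot Cc hanti hjac, hQ2tot Cc hanti hjac]
  simp only [smul_zero, add_zero, zero_add, neg_one_smul, sub_neg_eq_add]
  exact hI Cc hanti
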